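/- Let (A,μ,η) be a monoid in M and let U be an object of M. The following are equivalent: (i) there exists a morphism l : A⊗(U⊗A) → U⊗A making U⊗A an A-bimodule whose right A-action is U⊗μ, i.e. l satisfies l∘(η⊗(U⊗A)) = id_{U⊗A}, l∘(μ⊗(U⊗A)) = l∘(A⊗l), and (U⊗μ)∘(l⊗A) = l∘(A⊗(U⊗μ)); (ii) there exists a morphism 𝔲 : A⊗U → U⊗A satisfying 𝔲∘(μ⊗U) = (U⊗μ)∘(𝔲⊗A)∘(A⊗𝔲) and 𝔲∘(η⊗U) = U⊗η. (The passage (ii)⇒(i) is given by l = (U⊗μ)∘(𝔲⊗A), and (i)⇒(ii) by 𝔲 = l∘(A⊗U⊗η).) -/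
import Mathlib


open CategoryTheory MonoidalCategory

/-- Lemma 1.9: for a monoid `(A, μ, η)` and an object `U`, the existence of an
`A`-bimodule structure on `U ⊗ A` whose right action is `U ◁ μ` is equivalent to the
existence of an entwining `A ⊗ U ⟶ U ⊗ A`. -/
theorem stmt_2 {M : Type*} [Category M] [MonoidalCategory M]
    (A U : M) (μ : A ⊗ A ⟶ A) (η : 𝟙_ M ⟶ A)
    (hassoc : (μ ▷ A) ≫ μ = (α_ A A A).hom ≫ (A ◁ μ) ≫ μ)
    (hunit_l : (η ▷ A) ≫ μ = (λ_ A).hom)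
    (hunit_r : (A ◁ η) ≫ μ = (ρ_ A).hom) :
    (∃ l : A ⊗ (U ⊗ A) ⟶ U ⊗ A,
        (η ▷ (U ⊗ A)) ≫ l = (λ_ (U ⊗ A)).hom ∧
        (μ ▷ (U ⊗ A)) ≫ l = (α_ A A (U ⊗ A)).hom ≫ (A ◁ l) ≫ l ∧
        (l ▷ A) ≫ (α_ U A A).hom ≫ (U ◁ μ) =
          (α_ A (U ⊗ A) A).hom ≫ (A ◁ (α_ U A A).hom) ≫ (A ◁ (U ◁ μ)) ≫ l) ↔
    (∃ u : A ⊗ U ⟶ U ⊗ A,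
        (μ ▷ U) ≫ u =
          (α_ A A U).hom ≫ (A ◁ u) ≫ (α_ A U A).inv ≫ (u ▷ A) ≫
            (α_ U A A).hom ≫ (U ◁ μ) ∧
        (η ▷ U) ≫ u = (λ_ U).hom ≫ (ρ_ U).inv ≫ (U ◁ η)) := by
  constructor
  · rintro ⟨l, hl1, hl2, hl3⟩
    set g : U ⟶ U ⊗ A := (ρ_ U).inv ≫ (U ◁ η) with hg
    refine ⟨(A ◁ g) ≫ l, ?_, ?_⟩
    · have key : ((A ◁ g) ≫ l) ▷ A ≫ (α_ U A A).hom ≫ (U ◁ μ) = (α_ A U A).hom ≫ l := by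
        calc ((A ◁ g) ≫ l) ▷ A ≫ (α_ U A A).hom ≫ (U ◁ μ)
            = ((A ◁ g) ▷ A) ≫ (l ▷ A) ≫ (α_ U A A).hom ≫ (U ◁ μ) := by
              simp
          _ = ((A ◁ g) ▷ A) ≫ (α_ A (U ⊗ A) A).hom ≫ (A ◁ (α_ U A A).hom) ≫
                (A ◁ (U ◁ μ)) ≫ l := by rw [hl3]
          _ = 𝟙 _ ⊗≫ (A ◁ (U ◁ ((η ▷ A) ≫ μ))) ⊗≫ l := by
              rw [hg]; monoidal
          _ = 𝟙 _ ⊗≫ (A ◁ (U ◁ (λ_ A).hom)) ⊗≫ l := by rw [hunit_l]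
          _ = (α_ A U A).hom ≫ l := by monoidal
      calc (μ ▷ U) ≫ ((A ◁ g) ≫ l)
          = ((μ ▷ U) ≫ (A ◁ g)) ≫ l := by simp
        _ = (((A ⊗ A) ◁ g) ≫ (μ ▷ (U ⊗ A))) ≫ l := by rw [← whisker_exchange]
        _ = ((A ⊗ A) ◁ g) ≫ (α_ A A (U ⊗ A)).hom ≫ (A ◁ l) ≫ l := by
            rw [Category.assoc, hl2]
        _ = (α_ A A U).hom ≫ (A ◁ ((A ◁ g) ≫ l)) ≫ l := by monoidal
        _ = (α_ A A U).hom ≫ (A ◁ ((A ◁ g) ≫ l)) ≫ (α_ A U A).inv ≫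
              (((A ◁ g) ≫ l) ▷ A) ≫ (α_ U A A).hom ≫ (U ◁ μ) := by
            rw [key]; simp
    · calc (η ▷ U) ≫ ((A ◁ g) ≫ l)
          = ((η ▷ U) ≫ (A ◁ g)) ≫ l := by simp
        _ = ((𝟙_ M ◁ g) ≫ (η ▷ (U ⊗ A))) ≫ l := by rw [← whisker_exchange]
        _ = (𝟙_ M ◁ g) ≫ (λ_ (U ⊗ A)).hom := by rw [Category.assoc, hl1]
        _ = (λ_ U).hom ≫ (ρ_ U).inv ≫ (U ◁ η) := by rw [hg]; monoidal
  · rintro ⟨u, hu1, hu2⟩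
    refine ⟨(α_ A U A).inv ≫ (u ▷ A) ≫ (α_ U A A).hom ≫ (U ◁ μ), ?_, ?_, ?_⟩
    · calc (η ▷ (U ⊗ A)) ≫ ((α_ A U A).inv ≫ (u ▷ A) ≫ (α_ U A A).hom ≫ (U ◁ μ))
          = 𝟙 _ ⊗≫ ((((η ▷ U) ≫ u) ▷ A) ≫ (α_ U A A).hom ≫ (U ◁ μ)) := by monoidal
        _ = 𝟙 _ ⊗≫ ((((λ_ U).hom ≫ (ρ_ U).inv ≫ (U ◁ η)) ▷ A) ≫ (α_ U A A).hom ≫ (U ◁ μ)) := by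
            rw [hu2]
        _ = (λ_ (U ⊗ A)).hom ≫ ((ρ_ U).inv ▷ A) ≫ (α_ U (𝟙_ M) A).hom ≫
              (U ◁ ((η ▷ A) ≫ μ)) := by monoidal
        _ = (λ_ (U ⊗ A)).hom := by rw [hunit_l]; monoidal
    · calc (μ ▷ (U ⊗ A)) ≫ ((α_ A U A).inv ≫ (u ▷ A) ≫ (α_ U A A).hom ≫ (U ◁ μ))
          = 𝟙 _ ⊗≫ ((((μ ▷ U) ≫ u) ▷ A) ≫ (α_ U A A).hom ≫ (U ◁ μ)) := by monoidal
        _ = 𝟙 _ ⊗≫ ((((α_ A A U).hom ≫ (A ◁ u) ≫ (α_ A U A).inv ≫ (u ▷ A) ≫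
              (α_ U A A).hom ≫ (U ◁ μ)) ▷ A) ≫ (α_ U A A).hom ≫ (U ◁ μ)) := by rw [hu1]
        _ = 𝟙 _ ⊗≫ ((A ◁ u) ▷ A) ⊗≫ (u ▷ (A ⊗ A)) ⊗≫ (U ◁ ((μ ▷ A) ≫ μ)) := by
            monoidal
        _ = 𝟙 _ ⊗≫ ((A ◁ u) ▷ A) ⊗≫ (u ▷ (A ⊗ A)) ⊗≫
              (U ◁ ((α_ A A A).hom ≫ (A ◁ μ) ≫ μ)) := by rw [hassoc]
        _ = 𝟙 _ ⊗≫ ((A ◁ u) ▷ A) ⊗≫ ((u ▷ (A ⊗ A)) ≫ ((U ⊗ A) ◁ μ)) ⊗≫ (U ◁ μ) := by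
            monoidal
        _ = 𝟙 _ ⊗≫ ((A ◁ u) ▷ A) ⊗≫ ((((A ⊗ U) : M) ◁ μ) ≫ (u ▷ A)) ⊗≫ (U ◁ μ) := by
            rw [← whisker_exchange]
        _ = (α_ A A (U ⊗ A)).hom ≫
              (A ◁ ((α_ A U A).inv ≫ (u ▷ A) ≫ (α_ U A A).hom ≫ (U ◁ μ))) ≫
              ((α_ A U A).inv ≫ (u ▷ A) ≫ (α_ U A A).hom ≫ (U ◁ μ)) := by monoidal
    · calc (((α_ A U A).inv ≫ (u ▷ A) ≫ (α_ U A A).hom ≫ (U ◁ μ)) ▷ A) ≫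
              (α_ U A A).hom ≫ (U ◁ μ)
          = 𝟙 _ ⊗≫ ((u ▷ A) ▷ A) ⊗≫ (U ◁ ((μ ▷ A) ≫ μ)) := by monoidal
        _ = 𝟙 _ ⊗≫ ((u ▷ A) ▷ A) ⊗≫ (U ◁ ((α_ A A A).hom ≫ (A ◁ μ) ≫ μ)) := by
            rw [hassoc]
        _ = 𝟙 _ ⊗≫ ((u ▷ (A ⊗ A)) ≫ ((U ⊗ A) ◁ μ)) ⊗≫ (U ◁ μ) := by monoidal
        _ = 𝟙 _ ⊗≫ ((((A ⊗ U) : M) ◁ μ) ≫ (u ▷ A)) ⊗≫ (U ◁ μ) := by rw [← whisker_exchange]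
        _ = (α_ A (U ⊗ A) A).hom ≫ (A ◁ (α_ U A A).hom) ≫ (A ◁ (U ◁ μ)) ≫
              ((α_ A U A).inv ≫ (u ▷ A) ≫ (α_ U A A).hom ≫ (U ◁ μ)) := by monoidal
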